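/- Let V be a real inner product space with almost contact metric structure (φ, ξ, η) and S symmetric with Sξ = αξ + βU, U ⊥ ξ unit, β ≠ 0, k ≠ 0. Suppose for all X, Y ⊥ ξ: -⟨Y, φU⟩⟨SX, U⟩ + k⟨Y, φU⟩⟨X, U⟩ - ⟨φSX, Y⟩ + ⟨φSY, X⟩ = 0. Then SφU + φSU = 0, SU = βξ + kU, and SφU = -kφU. -/

import Mathlib

open RealInnerProductSpace

/-- From equation (4.8) of the paper one derives `SφU + φSU = 0`,
`SU = βξ + kU` and `SφU = -kφU`. -/
theorem stmt_11 {V : Type*} [NormedAddCommGroup V] [InnerProductSpace ℝ V]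
    [FiniteDimensional ℝ V]
    (φ S : V →ₗ[ℝ] V) (ξ U : V) (α β k : ℝ)
    (hφ2 : ∀ X : V, φ (φ X) = -X + ⟪X, ξ⟫ • ξ)
    (hξ : ⟪ξ, ξ⟫ = 1)
    (hmetric : ∀ X Y : V, ⟪φ X, φ Y⟫ = ⟪X, Y⟫ - ⟪X, ξ⟫ * ⟪Y, ξ⟫)
    (hskew : ∀ X Y : V, ⟪φ X, Y⟫ = -⟪X, φ Y⟫)
    (hφξ : φ ξ = 0)
    (hsym : ∀ X Y : V, ⟪S X, Y⟫ = ⟪X, S Y⟫)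
    (hSξ : S ξ = α • ξ + β • U)
    (hUξ : ⟪U, ξ⟫ = 0) (hU : ‖U‖ = 1)
    (hβ : β ≠ 0) (hk : k ≠ 0)
    (hmain : ∀ X Y : V, ⟪X, ξ⟫ = 0 → ⟪Y, ξ⟫ = 0 →
      -(⟪Y, φ U⟫ * ⟪S X, U⟫) + k * ⟪Y, φ U⟫ * ⟪X, U⟫
        - ⟪φ (S X), Y⟫ + ⟪φ (S Y), X⟫ = 0) :
    S (φ U) + φ (S U) = 0 ∧ S U = β • ξ + k • U ∧ S (φ U) = -k • φ U := by
  have hUU : ⟪U, U⟫ = 1 := by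
    have := real_inner_self_eq_norm_mul_norm U
    rw [hU] at this; simpa using this
  have hφUξ : ⟪φ U, ξ⟫ = 0 := by rw [hskew]; simp [hφξ]
  have hξφU : ⟪ξ, φ U⟫ = 0 := by rw [real_inner_comm]; exact hφUξ
  have hUφU : ⟪U, φ U⟫ = 0 := by
    have h1 := hskew U U
    rw [real_inner_comm U (φ U)] at h1
    linarith
  have hφUU : ⟪φ U, U⟫ = 0 := by rw [real_inner_comm]; exact hUφU
  have hξU : ⟪ξ, U⟫ = 0 := by rw [real_inner_comm]; exact hUξ
  have hφUφU : ⟪φ U, φ U⟫ = 1 := by rw [hmetric]; simp [hUξ, hUU, hU]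
  have hφφU : φ (φ U) = -U := by rw [hφ2]; simp [hUξ]
  have hSUξ : ⟪S U, ξ⟫ = β := by
    rw [hsym, hSξ]
    simp [inner_add_right, real_inner_smul_right, hUξ, hUU, hU]
  have hSφUξ : ⟪S (φ U), ξ⟫ = 0 := by
    rw [hsym, hSξ]
    simp [inner_add_right, real_inner_smul_right, hφUξ, hφUU]
  -- a vector orthogonal to ξ and to all of ξ^⊥ is zero
  have hext : ∀ W : V, ⟪W, ξ⟫ = 0 → (∀ Y : V, ⟪Y, ξ⟫ = 0 → ⟪Y, W⟫ = 0) → W = 0 := by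
    intro W h1 h2
    have := h2 W h1
    exact inner_self_eq_zero.mp this
  -- the key vector identity derived from hmain
  have key : ∀ X : V, ⟪X, ξ⟫ = 0 →
      φ (S X) + S (φ X)
        = (k * ⟪X, U⟫ - ⟪S X, U⟫) • φ U - (β * ⟪X, φ U⟫) • ξ := by
    intro X hX
    have hφXξ : ⟪φ X, ξ⟫ = 0 := by rw [hskew]; simp [hφξ]
    have hSφXξ : ⟪S (φ X), ξ⟫ = -(β * ⟪X, φ U⟫) := by
      rw [hsym, hSξ]
      have hφXU : ⟪φ X, U⟫ = -⟪X, φ U⟫ := hskew X U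
      simp [inner_add_right, real_inner_smul_right, hφXξ, hφXU]
    have hφSXξ : ⟪φ (S X), ξ⟫ = 0 := by rw [hskew]; simp [hφξ]
    set W : V := φ (S X) + S (φ X)
        - ((k * ⟪X, U⟫ - ⟪S X, U⟫) • φ U - (β * ⟪X, φ U⟫) • ξ) with hW
    have hWξ : ⟪W, ξ⟫ = 0 := by
      rw [hW]
      simp [inner_sub_left, inner_add_left, real_inner_smul_left, hφSXξ, hSφXξ,
        hφUξ, hξ, (by rw [← real_inner_self_eq_norm_sq, hξ] : ‖ξ‖ ^ 2 = 1)]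
    have hWperp : ∀ Y : V, ⟪Y, ξ⟫ = 0 → ⟪Y, W⟫ = 0 := by
      intro Y hY
      have hm := hmain X Y hX hY
      have h1 : ⟪φ (S Y), X⟫ = -⟪Y, S (φ X)⟫ := by
        rw [hskew, hsym]
      have h2 : ⟪φ (S X), Y⟫ = ⟪Y, φ (S X)⟫ := real_inner_comm _ _
      rw [h1, h2] at hm
      rw [hW]
      simp only [inner_sub_right, inner_add_right, real_inner_smul_right, hY]
      linarith [hm]
    have := hext W hWξ hWperp
    rw [hW] at this
    exact sub_eq_zero.mp this
  -- specialize at X = U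
  have k1 : φ (S U) + S (φ U) = (k - ⟪S U, U⟫) • φ U := by
    have h := key U hUξ
    rw [hUU, hUφU] at h
    simpa using h
  -- specialize at X = φ U
  have k2 : φ (S (φ U)) - S U = -⟪S (φ U), U⟫ • φ U - β • ξ := by
    have h := key (φ U) hφUξ
    rw [hφUU, hφUφU, hφφU, map_neg] at h
    simpa [sub_eq_add_neg, add_comm] using h
  -- inner products with U
  have hA : ⟪φ (S (φ U)), U⟫ = ⟪S U, U⟫ := by
    have h := congrArg (fun v => ⟪v, U⟫) k2
    simp only [inner_sub_left, real_inner_smul_left, inner_neg_left] at h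
    rw [hφUU, hξU] at h
    linarith
  have hB : -⟪S U, U⟫ + ⟪φ (S (φ U)), U⟫ = -(k - ⟪S U, U⟫) := by
    have h := congrArg (fun v => ⟪φ v, U⟫) k1
    simp only [map_add, map_smul, inner_add_left, real_inner_smul_left] at h
    rw [hφ2 (S U), hφφU] at h
    simp only [inner_add_left, inner_neg_left, real_inner_smul_left, hSUξ, hξU] at h
    rw [hUU] at h
    linarith
  have hc : k - ⟪S U, U⟫ = 0 := by
    rw [hA] at hB; linarith
  have goal1 : S (φ U) + φ (S U) = 0 := by
    rw [hc, zero_smul] at k1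
    rw [add_comm]; exact k1
  have hSφU : S (φ U) = -φ (S U) :=
    eq_neg_of_add_eq_zero_left goal1
  have hperp : ∀ X : V, ⟪X, ξ⟫ = 0 → ⟪X, S U⟫ = k * ⟪X, U⟫ := by
    intro X hX
    have h := congrArg (fun v => ⟪v, φ U⟫) (key X hX)
    simp only [inner_add_left, inner_sub_left, real_inner_smul_left] at h
    rw [hφUφU, hξφU] at h
    have e1 : ⟪φ (S X), φ U⟫ = ⟪S X, U⟫ := by
      rw [hmetric, hUξ]; ring
    have e2 : ⟪S (φ X), φ U⟫ = -⟪X, S U⟫ := by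
      rw [hsym (φ X) (φ U), hSφU, inner_neg_right, hmetric, hX]
      ring
    have e3 : ⟪S X, U⟫ = ⟪X, S U⟫ := hsym X U
    rw [e1, e2] at h
    linarith
  have goal2 : S U = β • ξ + k • U := by
    have hDξ : ⟪S U - (β • ξ + k • U), ξ⟫ = 0 := by
      simp [inner_sub_left, inner_add_left, real_inner_smul_left, hSUξ, hξ, hUξ, (by rw [← real_inner_self_eq_norm_sq, hξ] : ‖ξ‖ ^ 2 = 1)]
    have hDperp : ∀ Y : V, ⟪Y, ξ⟫ = 0 → ⟪Y, S U - (β • ξ + k • U)⟫ = 0 := by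
      intro Y hY
      simp only [inner_sub_right, inner_add_right, real_inner_smul_right, hY]
      rw [hperp Y hY]; ring
    have := hext _ hDξ hDperp
    exact sub_eq_zero.mp this
  have goal3 : S (φ U) = -k • φ U := by
    rw [hSφU, goal2]
    simp [map_add, map_smul, hφξ]
  exact ⟨goal1, goal2, goal3⟩
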